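/- Let l1, l2, l3, l4 be integers, each at least 2. Then the symmetric sum over all 24 permutations σ of {1,2,3,4} satisfies Σ_{σ ∈ S4} ζ(l_{σ(1)}, l_{σ(2)}, l_{σ(3)}, l_{σ(4)}) = ζ(l1)ζ(l2)ζ(l3)ζ(l4) − Σ_{{i,j}} ζ(l_i+l_j)·ζ(l_k)·ζ(l_m) + Σ_{{{i,j},{k,m}}} ζ(l_i+l_j)·ζ(l_k+l_m) + 2·Σ_{{i,j,k}} ζ(l_i+l_j+l_k)·ζ(l_m) − 6·ζ(l1+l2+l3+l4), where the first sum on the right runs over the six 2-element subsets {i,j} of {1,2,3,4} (with {k,m} the complementary pair), the second over the three partitions of {1,2,3,4} into two unordered pairs, and the third over the four 3-element subsets {i,j,k} (with m the remaining index). (Case n=4 of Corollary 1 of the paper, restricted to convergent indices; this is Hoffman's symmetric-sum theorem in depth 4.) -/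

import Mathlib

open Classical in
/-- The multiple zeta value `ζ(l 0, l 1, …, l (n-1)) =
∑_{m 0 > m 1 > ⋯ > m (n-1) ≥ 1} ∏ i, 1 / (m i) ^ (l i)`. -/
noncomputable def mzv {n : ℕ} (l : Fin n → ℕ) : ℝ :=
  ∑' m : Fin n → ℕ,
    if StrictAnti m ∧ ∀ i, 1 ≤ m i then ∏ i, (1 : ℝ) / (m i : ℝ) ^ (l i) else 0

namespace HoffmanAux

open scoped ENNReal

noncomputable def t (a m : ℕ) : ℝ≥0∞ := ((m : ℝ≥0∞))⁻¹ ^ a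

lemma t_ne_top {a m : ℕ} (hm : 1 ≤ m) : t a m ≠ ⊤ :=
  ENNReal.pow_ne_top (ENNReal.inv_ne_top.mpr (Nat.cast_ne_zero.mpr (by omega)))

lemma t_mul (a b m : ℕ) : t a m * t b m = t (a + b) m := by
  rw [t, t, t, ← pow_add]

lemma t_toReal (a m : ℕ) : (t a m).toReal = 1 / (m : ℝ) ^ a := by
  rw [t, ENNReal.toReal_pow, ENNReal.toReal_inv, ENNReal.toReal_natCast, inv_pow, one_div]

noncomputable def Z1 (a : ℕ) : ℝ≥0∞ := ∑' m : ℕ, if 1 ≤ m then t a m else 0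

noncomputable def Z2 (a b : ℕ) : ℝ≥0∞ :=
  ∑' p : ℕ × ℕ, if p.2 < p.1 ∧ 1 ≤ p.2 then t a p.1 * t b p.2 else 0

noncomputable def Z3 (a b c : ℕ) : ℝ≥0∞ :=
  ∑' p : ℕ × ℕ × ℕ,
    if p.2.1 < p.1 ∧ p.2.2 < p.2.1 ∧ 1 ≤ p.2.2 then
      t a p.1 * (t b p.2.1 * t c p.2.2) else 0

noncomputable def Z4 (a b c d : ℕ) : ℝ≥0∞ :=
  ∑' p : ℕ × ℕ × ℕ × ℕ,
    if p.2.1 < p.1 ∧ p.2.2.1 < p.2.1 ∧ p.2.2.2 < p.2.2.1 ∧ 1 ≤ p.2.2.2 then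
      t a p.1 * (t b p.2.1 * (t c p.2.2.1 * t d p.2.2.2)) else 0

lemma S1 (a b : ℕ) : Z1 a * Z1 b = Z2 a b + Z2 b a + Z1 (a + b) := by
  have h : Z1 a * Z1 b = ∑' p : ℕ × ℕ,
      (if 1 ≤ p.1 then t a p.1 else 0) * (if 1 ≤ p.2 then t b p.2 else 0) :=
    calc Z1 a * Z1 b = ∑' m : ℕ, (if 1 ≤ m then t a m else 0) * Z1 b :=
          ENNReal.tsum_mul_right.symm
    _ = ∑' (m : ℕ) (n : ℕ), (if 1 ≤ m then t a m else 0) * (if 1 ≤ n then t b n else 0) :=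
          tsum_congr fun m => ENNReal.tsum_mul_left.symm
    _ = _ := (ENNReal.tsum_prod (f := fun m n =>
          (if 1 ≤ m then t a m else 0) * (if 1 ≤ n then t b n else 0))).symm
  rw [h]
  have key : ∀ p : ℕ × ℕ,
      (if 1 ≤ p.1 then t a p.1 else 0) * (if 1 ≤ p.2 then t b p.2 else 0) =
      (if p.2 < p.1 ∧ 1 ≤ p.2 then t a p.1 * t b p.2 else 0)
      + (if p.1 < p.2 ∧ 1 ≤ p.1 then t b p.2 * t a p.1 else 0)
      + (if p.1 = p.2 ∧ 1 ≤ p.1 then t a p.1 * t b p.2 else 0) := by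
    rintro ⟨x, y⟩
    split_ifs <;> (try (exfalso; omega)) <;> ring
  rw [tsum_congr key, ENNReal.tsum_add, ENNReal.tsum_add]
  refine congrArg₂ (· + ·) (congrArg₂ (· + ·) rfl ?_) ?_
  · exact Equiv.tsum_eq (Equiv.prodComm ℕ ℕ)
      (fun q : ℕ × ℕ => if q.2 < q.1 ∧ 1 ≤ q.2 then t b q.1 * t a q.2 else 0)
  · rw [Z1]
    rw [← Function.Injective.tsum_eq (g := fun m : ℕ => (m, m))
      (fun m n h => (Prod.mk.injEq _ _ _ _ ▸ h).1)]
    · exact tsum_congr fun m => by by_cases hm : 1 ≤ m <;> simp [hm, t_mul]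
    · rintro ⟨x, y⟩ h
      simp only [Function.mem_support] at h
      have : x = y := by by_contra hxy; simp [hxy] at h
      exact ⟨x, by simp [this]⟩

lemma S2 (a b c : ℕ) : Z2 a b * Z1 c =
    Z3 a b c + Z3 a c b + Z3 c a b + Z2 (a + c) b + Z2 a (b + c) := by
  have h : Z2 a b * Z1 c = ∑' q : (ℕ × ℕ) × ℕ,
      (if q.1.2 < q.1.1 ∧ 1 ≤ q.1.2 then t a q.1.1 * t b q.1.2 else 0) *
      (if 1 ≤ q.2 then t c q.2 else 0) :=
    calc Z2 a b * Z1 c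
        = ∑' p : ℕ × ℕ, (if p.2 < p.1 ∧ 1 ≤ p.2 then t a p.1 * t b p.2 else 0) * Z1 c :=
          ENNReal.tsum_mul_right.symm
    _ = ∑' (p : ℕ × ℕ) (n : ℕ), (if p.2 < p.1 ∧ 1 ≤ p.2 then t a p.1 * t b p.2 else 0)
          * (if 1 ≤ n then t c n else 0) :=
          tsum_congr fun p => ENNReal.tsum_mul_left.symm
    _ = _ := (ENNReal.tsum_prod (f := fun (p : ℕ × ℕ) (n : ℕ) =>
          (if p.2 < p.1 ∧ 1 ≤ p.2 then t a p.1 * t b p.2 else 0)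
          * (if 1 ≤ n then t c n else 0))).symm
  rw [h]
  have key : ∀ q : (ℕ × ℕ) × ℕ,
      (if q.1.2 < q.1.1 ∧ 1 ≤ q.1.2 then t a q.1.1 * t b q.1.2 else 0) *
      (if 1 ≤ q.2 then t c q.2 else 0) =
      (if q.1.2 < q.1.1 ∧ q.2 < q.1.2 ∧ 1 ≤ q.2 then t a q.1.1 * (t b q.1.2 * t c q.2) else 0)
      + (if q.2 < q.1.1 ∧ q.1.2 < q.2 ∧ 1 ≤ q.1.2 then t a q.1.1 * (t c q.2 * t b q.1.2) else 0)
      + (if q.1.1 < q.2 ∧ q.1.2 < q.1.1 ∧ 1 ≤ q.1.2 then t c q.2 * (t a q.1.1 * t b q.1.2) else 0)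
      + (if q.1.2 < q.1.1 ∧ 1 ≤ q.1.2 ∧ q.2 = q.1.1 then t a q.1.1 * t b q.1.2 * t c q.2 else 0)
      + (if q.1.2 < q.1.1 ∧ 1 ≤ q.1.2 ∧ q.2 = q.1.2 then t a q.1.1 * t b q.1.2 * t c q.2 else 0) := by
    rintro ⟨⟨x, y⟩, p⟩
    split_ifs <;> (try (exfalso; omega)) <;> ring
  rw [tsum_congr key, ENNReal.tsum_add, ENNReal.tsum_add, ENNReal.tsum_add, ENNReal.tsum_add]
  refine congrArg₂ (· + ·) (congrArg₂ (· + ·) (congrArg₂ (· + ·)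
    (congrArg₂ (· + ·) ?_ ?_) ?_) ?_) ?_
  · exact Equiv.tsum_eq (Equiv.prodAssoc ℕ ℕ ℕ)
      (fun r : ℕ × ℕ × ℕ => if r.2.1 < r.1 ∧ r.2.2 < r.2.1 ∧ 1 ≤ r.2.2 then
        t a r.1 * (t b r.2.1 * t c r.2.2) else 0)
  · exact Equiv.tsum_eq
      (⟨fun q : (ℕ × ℕ) × ℕ => (q.1.1, q.2, q.1.2),
        fun r : ℕ × ℕ × ℕ => ((r.1, r.2.2), r.2.1), fun q => rfl, fun r => rfl⟩ :
        (ℕ × ℕ) × ℕ ≃ ℕ × ℕ × ℕ)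
      (fun r : ℕ × ℕ × ℕ => if r.2.1 < r.1 ∧ r.2.2 < r.2.1 ∧ 1 ≤ r.2.2 then
        t a r.1 * (t c r.2.1 * t b r.2.2) else 0)
  · exact Equiv.tsum_eq
      (⟨fun q : (ℕ × ℕ) × ℕ => (q.2, q.1.1, q.1.2),
        fun r : ℕ × ℕ × ℕ => ((r.2.1, r.2.2), r.1), fun q => rfl, fun r => rfl⟩ :
        (ℕ × ℕ) × ℕ ≃ ℕ × ℕ × ℕ)
      (fun r : ℕ × ℕ × ℕ => if r.2.1 < r.1 ∧ r.2.2 < r.2.1 ∧ 1 ≤ r.2.2 then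
        t c r.1 * (t a r.2.1 * t b r.2.2) else 0)
  · rw [Z2]
    rw [← Function.Injective.tsum_eq (g := fun r : ℕ × ℕ => (r, r.1))
      (fun u v h => congrArg Prod.fst h)]
    · refine tsum_congr fun r => ?_
      by_cases hr : r.2 < r.1 ∧ 1 ≤ r.2
      · rw [if_pos ⟨hr.1, hr.2, rfl⟩, if_pos hr, ← t_mul]; ring
      · rw [if_neg (by tauto), if_neg hr]
    · rintro ⟨⟨x, y⟩, p⟩ h
      simp only [Function.mem_support] at h
      have hp : p = x := by by_contra hp; exact h (if_neg (by tauto))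
      exact ⟨(x, y), by rw [hp]⟩
  · rw [Z2]
    rw [← Function.Injective.tsum_eq (g := fun r : ℕ × ℕ => (r, r.2))
      (fun u v h => congrArg Prod.fst h)]
    · refine tsum_congr fun r => ?_
      by_cases hr : r.2 < r.1 ∧ 1 ≤ r.2
      · rw [if_pos ⟨hr.1, hr.2, rfl⟩, if_pos hr, ← t_mul]; ring
      · rw [if_neg (by tauto), if_neg hr]
    · rintro ⟨⟨x, y⟩, p⟩ h
      simp only [Function.mem_support] at h
      have hp : p = y := by by_contra hp; exact h (if_neg (by tauto))
      exact ⟨(x, y), by rw [hp]⟩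

lemma S3 (a b c d : ℕ) : Z3 a b c * Z1 d =
    Z4 d a b c + Z4 a d b c + Z4 a b d c + Z4 a b c d
    + Z3 (a + d) b c + Z3 a (b + d) c + Z3 a b (c + d) := by
  have h : Z3 a b c * Z1 d = ∑' q : (ℕ × ℕ × ℕ) × ℕ,
      (if q.1.2.1 < q.1.1 ∧ q.1.2.2 < q.1.2.1 ∧ 1 ≤ q.1.2.2 then
        t a q.1.1 * (t b q.1.2.1 * t c q.1.2.2) else 0) *
      (if 1 ≤ q.2 then t d q.2 else 0) :=
    calc Z3 a b c * Z1 d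
        = ∑' p : ℕ × ℕ × ℕ, (if p.2.1 < p.1 ∧ p.2.2 < p.2.1 ∧ 1 ≤ p.2.2 then
            t a p.1 * (t b p.2.1 * t c p.2.2) else 0) * Z1 d :=
          ENNReal.tsum_mul_right.symm
    _ = ∑' (p : ℕ × ℕ × ℕ) (n : ℕ), (if p.2.1 < p.1 ∧ p.2.2 < p.2.1 ∧ 1 ≤ p.2.2 then
            t a p.1 * (t b p.2.1 * t c p.2.2) else 0) * (if 1 ≤ n then t d n else 0) :=
          tsum_congr fun p => ENNReal.tsum_mul_left.symm
    _ = _ := (ENNReal.tsum_prod (f := fun (p : ℕ × ℕ × ℕ) (n : ℕ) =>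
          (if p.2.1 < p.1 ∧ p.2.2 < p.2.1 ∧ 1 ≤ p.2.2 then
            t a p.1 * (t b p.2.1 * t c p.2.2) else 0) * (if 1 ≤ n then t d n else 0))).symm
  rw [h]
  have key : ∀ q : (ℕ × ℕ × ℕ) × ℕ,
      (if q.1.2.1 < q.1.1 ∧ q.1.2.2 < q.1.2.1 ∧ 1 ≤ q.1.2.2 then
        t a q.1.1 * (t b q.1.2.1 * t c q.1.2.2) else 0) *
      (if 1 ≤ q.2 then t d q.2 else 0) =
      (if q.1.1 < q.2 ∧ q.1.2.1 < q.1.1 ∧ q.1.2.2 < q.1.2.1 ∧ 1 ≤ q.1.2.2 then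
        t d q.2 * (t a q.1.1 * (t b q.1.2.1 * t c q.1.2.2)) else 0)
      + (if q.2 < q.1.1 ∧ q.1.2.1 < q.2 ∧ q.1.2.2 < q.1.2.1 ∧ 1 ≤ q.1.2.2 then
        t a q.1.1 * (t d q.2 * (t b q.1.2.1 * t c q.1.2.2)) else 0)
      + (if q.1.2.1 < q.1.1 ∧ q.2 < q.1.2.1 ∧ q.1.2.2 < q.2 ∧ 1 ≤ q.1.2.2 then
        t a q.1.1 * (t b q.1.2.1 * (t d q.2 * t c q.1.2.2)) else 0)
      + (if q.1.2.1 < q.1.1 ∧ q.1.2.2 < q.1.2.1 ∧ q.2 < q.1.2.2 ∧ 1 ≤ q.2 then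
        t a q.1.1 * (t b q.1.2.1 * (t c q.1.2.2 * t d q.2)) else 0)
      + (if (q.1.2.1 < q.1.1 ∧ q.1.2.2 < q.1.2.1 ∧ 1 ≤ q.1.2.2) ∧ q.2 = q.1.1 then
        t a q.1.1 * (t b q.1.2.1 * t c q.1.2.2) * t d q.2 else 0)
      + (if (q.1.2.1 < q.1.1 ∧ q.1.2.2 < q.1.2.1 ∧ 1 ≤ q.1.2.2) ∧ q.2 = q.1.2.1 then
        t a q.1.1 * (t b q.1.2.1 * t c q.1.2.2) * t d q.2 else 0)
      + (if (q.1.2.1 < q.1.1 ∧ q.1.2.2 < q.1.2.1 ∧ 1 ≤ q.1.2.2) ∧ q.2 = q.1.2.2 then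
        t a q.1.1 * (t b q.1.2.1 * t c q.1.2.2) * t d q.2 else 0) := by
    rintro ⟨⟨x, y, z⟩, p⟩
    dsimp only
    by_cases h1 : y < x ∧ z < y ∧ 1 ≤ z
    · by_cases h2 : 1 ≤ p
      · rw [if_pos h1, if_pos h2]
        rcases (by omega : x < p ∨ (p < x ∧ y < p) ∨ (y < p ∧ p < x) ∧ False ∨
            (p < y ∧ z < p) ∨ (p < z ∧ 1 ≤ p) ∨ p = x ∨ p = y ∨ p = z) with
          hp | hp | hp | hp | hp | hp | hp | hp
        · rw [if_pos (by omega), if_neg (by omega), if_neg (by omega), if_neg (by omega),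
            if_neg (by omega), if_neg (by omega), if_neg (by omega)]
          ring
        · rw [if_neg (by omega), if_pos (by omega), if_neg (by omega), if_neg (by omega),
            if_neg (by omega), if_neg (by omega), if_neg (by omega)]
          ring
        · exact absurd hp.2 not_false
        · rw [if_neg (by omega), if_neg (by omega), if_pos (by omega), if_neg (by omega),
            if_neg (by omega), if_neg (by omega), if_neg (by omega)]
          ring
        · rw [if_neg (by omega), if_neg (by omega), if_neg (by omega), if_pos (by omega),
            if_neg (by omega), if_neg (by omega), if_neg (by omega)]
          ring
        · rw [if_neg (by omega), if_neg (by omega), if_neg (by omega), if_neg (by omega),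
            if_pos (by omega), if_neg (by omega), if_neg (by omega)]
          ring
        · rw [if_neg (by omega), if_neg (by omega), if_neg (by omega), if_neg (by omega),
            if_neg (by omega), if_pos (by omega), if_neg (by omega)]
          ring
        · rw [if_neg (by omega), if_neg (by omega), if_neg (by omega), if_neg (by omega),
            if_neg (by omega), if_neg (by omega), if_pos (by omega)]
          ring
      · rw [if_neg h2, mul_zero, if_neg (by omega), if_neg (by omega), if_neg (by omega),
          if_neg (by omega), if_neg (by omega), if_neg (by omega), if_neg (by omega)]
        ring
    · rw [if_neg h1, zero_mul, if_neg (by omega), if_neg (by omega), if_neg (by omega),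
        if_neg (by omega), if_neg (by omega), if_neg (by omega), if_neg (by omega)]
      ring
  rw [tsum_congr key, ENNReal.tsum_add, ENNReal.tsum_add, ENNReal.tsum_add,
    ENNReal.tsum_add, ENNReal.tsum_add, ENNReal.tsum_add]
  refine congrArg₂ (· + ·) (congrArg₂ (· + ·) (congrArg₂ (· + ·) (congrArg₂ (· + ·)
    (congrArg₂ (· + ·) (congrArg₂ (· + ·) ?_ ?_) ?_) ?_) ?_) ?_) ?_
  · exact Equiv.tsum_eq
      (⟨fun q : (ℕ × ℕ × ℕ) × ℕ => (q.2, q.1.1, q.1.2.1, q.1.2.2),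
        fun r : ℕ × ℕ × ℕ × ℕ => ((r.2.1, r.2.2.1, r.2.2.2), r.1),
        fun q => rfl, fun r => rfl⟩ : (ℕ × ℕ × ℕ) × ℕ ≃ ℕ × ℕ × ℕ × ℕ)
      (fun r : ℕ × ℕ × ℕ × ℕ =>
        if r.2.1 < r.1 ∧ r.2.2.1 < r.2.1 ∧ r.2.2.2 < r.2.2.1 ∧ 1 ≤ r.2.2.2 then
          t d r.1 * (t a r.2.1 * (t b r.2.2.1 * t c r.2.2.2)) else 0)
  · exact Equiv.tsum_eq
      (⟨fun q : (ℕ × ℕ × ℕ) × ℕ => (q.1.1, q.2, q.1.2.1, q.1.2.2),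
        fun r : ℕ × ℕ × ℕ × ℕ => ((r.1, r.2.2.1, r.2.2.2), r.2.1),
        fun q => rfl, fun r => rfl⟩ : (ℕ × ℕ × ℕ) × ℕ ≃ ℕ × ℕ × ℕ × ℕ)
      (fun r : ℕ × ℕ × ℕ × ℕ =>
        if r.2.1 < r.1 ∧ r.2.2.1 < r.2.1 ∧ r.2.2.2 < r.2.2.1 ∧ 1 ≤ r.2.2.2 then
          t a r.1 * (t d r.2.1 * (t b r.2.2.1 * t c r.2.2.2)) else 0)
  · exact Equiv.tsum_eq
      (⟨fun q : (ℕ × ℕ × ℕ) × ℕ => (q.1.1, q.1.2.1, q.2, q.1.2.2),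
        fun r : ℕ × ℕ × ℕ × ℕ => ((r.1, r.2.1, r.2.2.2), r.2.2.1),
        fun q => rfl, fun r => rfl⟩ : (ℕ × ℕ × ℕ) × ℕ ≃ ℕ × ℕ × ℕ × ℕ)
      (fun r : ℕ × ℕ × ℕ × ℕ =>
        if r.2.1 < r.1 ∧ r.2.2.1 < r.2.1 ∧ r.2.2.2 < r.2.2.1 ∧ 1 ≤ r.2.2.2 then
          t a r.1 * (t b r.2.1 * (t d r.2.2.1 * t c r.2.2.2)) else 0)
  · exact Equiv.tsum_eq
      (⟨fun q : (ℕ × ℕ × ℕ) × ℕ => (q.1.1, q.1.2.1, q.1.2.2, q.2),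
        fun r : ℕ × ℕ × ℕ × ℕ => ((r.1, r.2.1, r.2.2.1), r.2.2.2),
        fun q => rfl, fun r => rfl⟩ : (ℕ × ℕ × ℕ) × ℕ ≃ ℕ × ℕ × ℕ × ℕ)
      (fun r : ℕ × ℕ × ℕ × ℕ =>
        if r.2.1 < r.1 ∧ r.2.2.1 < r.2.1 ∧ r.2.2.2 < r.2.2.1 ∧ 1 ≤ r.2.2.2 then
          t a r.1 * (t b r.2.1 * (t c r.2.2.1 * t d r.2.2.2)) else 0)
  · rw [Z3]
    rw [← Function.Injective.tsum_eq (g := fun r : ℕ × ℕ × ℕ => (r, r.1))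
      (fun u v h => congrArg Prod.fst h)]
    · refine tsum_congr fun r => ?_
      by_cases hr : r.2.1 < r.1 ∧ r.2.2 < r.2.1 ∧ 1 ≤ r.2.2
      · rw [if_pos ⟨hr, rfl⟩, if_pos hr, ← t_mul]; ring
      · rw [if_neg (by tauto), if_neg hr]
    · rintro ⟨⟨x, y, z⟩, p⟩ h
      simp only [Function.mem_support] at h
      have hp : p = x := by by_contra hp; exact h (if_neg (by tauto))
      exact ⟨(x, y, z), by rw [hp]⟩
  · rw [Z3]
    rw [← Function.Injective.tsum_eq (g := fun r : ℕ × ℕ × ℕ => (r, r.2.1))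
      (fun u v h => congrArg Prod.fst h)]
    · refine tsum_congr fun r => ?_
      by_cases hr : r.2.1 < r.1 ∧ r.2.2 < r.2.1 ∧ 1 ≤ r.2.2
      · rw [if_pos ⟨hr, rfl⟩, if_pos hr, ← t_mul]; ring
      · rw [if_neg (by tauto), if_neg hr]
    · rintro ⟨⟨x, y, z⟩, p⟩ h
      simp only [Function.mem_support] at h
      have hp : p = y := by by_contra hp; exact h (if_neg (by tauto))
      exact ⟨(x, y, z), by rw [hp]⟩
  · rw [Z3]
    rw [← Function.Injective.tsum_eq (g := fun r : ℕ × ℕ × ℕ => (r, r.2.2))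
      (fun u v h => congrArg Prod.fst h)]
    · refine tsum_congr fun r => ?_
      by_cases hr : r.2.1 < r.1 ∧ r.2.2 < r.2.1 ∧ 1 ≤ r.2.2
      · rw [if_pos ⟨hr, rfl⟩, if_pos hr, ← t_mul]; ring
      · rw [if_neg (by tauto), if_neg hr]
    · rintro ⟨⟨x, y, z⟩, p⟩ h
      simp only [Function.mem_support] at h
      have hp : p = z := by by_contra hp; exact h (if_neg (by tauto))
      exact ⟨(x, y, z), by rw [hp]⟩

lemma Z1_ne_top {a : ℕ} (ha : 2 ≤ a) : Z1 a ≠ ⊤ := by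
  have hs : Summable (fun m : ℕ => if 1 ≤ m then (1 : ℝ) / (m : ℝ) ^ a else 0) := by
    refine ((Real.summable_one_div_nat_pow (p := a)).mpr (by omega)).congr fun m => ?_
    by_cases hm : 1 ≤ m
    · rw [if_pos hm]
    · have hm0 : m = 0 := by omega
      subst hm0
      rw [if_neg hm, Nat.cast_zero, zero_pow (by omega : a ≠ 0), div_zero]
  have h0 : ∀ m : ℕ, 0 ≤ (if 1 ≤ m then (1 : ℝ) / (m : ℝ) ^ a else 0) := fun m => by positivity
  have heq : ∀ m : ℕ, (if 1 ≤ m then t a m else 0)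
      = ENNReal.ofReal (if 1 ≤ m then (1 : ℝ) / (m : ℝ) ^ a else 0) := by
    intro m
    by_cases hm : 1 ≤ m
    · rw [if_pos hm, if_pos hm, t, one_div, ← inv_pow,
        ENNReal.ofReal_pow (by positivity), ENNReal.ofReal_inv_of_pos
          (by exact_mod_cast Nat.pos_of_ne_zero (by omega)), ENNReal.ofReal_natCast]
    · simp [hm]
  rw [Z1, tsum_congr heq, ← ENNReal.ofReal_tsum_of_nonneg h0 hs]
  exact ENNReal.ofReal_ne_top

lemma Z2_ne_top {a b : ℕ} (ha : 2 ≤ a) (hb : 2 ≤ b) : Z2 a b ≠ ⊤ := by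
  refine ne_top_of_le_ne_top (ENNReal.mul_ne_top (Z1_ne_top ha) (Z1_ne_top hb)) ?_
  rw [S1 a b]
  exact le_add_right (le_add_right le_rfl)

lemma Z3_ne_top {a b c : ℕ} (ha : 2 ≤ a) (hb : 2 ≤ b) (hc : 2 ≤ c) : Z3 a b c ≠ ⊤ := by
  refine ne_top_of_le_ne_top (ENNReal.mul_ne_top (Z2_ne_top ha hb) (Z1_ne_top hc)) ?_
  rw [S2 a b c]
  exact le_add_right (le_add_right (le_add_right (le_add_right le_rfl)))

lemma Z4_ne_top {a b c d : ℕ} (ha : 2 ≤ a) (hb : 2 ≤ b) (hc : 2 ≤ c) (hd : 2 ≤ d) :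
    Z4 a b c d ≠ ⊤ := by
  refine ne_top_of_le_ne_top (ENNReal.mul_ne_top (Z3_ne_top hb hc hd) (Z1_ne_top ha)) ?_
  rw [S3 b c d a]
  exact le_add_right (le_add_right (le_add_right (le_add_right (le_add_right
    (le_add_right le_rfl)))))

noncomputable def p1 (a : ℕ) : ℝ := (Z1 a).toReal
noncomputable def p2 (a b : ℕ) : ℝ := (Z2 a b).toReal
noncomputable def p3 (a b c : ℕ) : ℝ := (Z3 a b c).toReal
noncomputable def p4 (a b c d : ℕ) : ℝ := (Z4 a b c d).toReal

lemma toReal_add3 {x y z : ℝ≥0∞} (hx : x ≠ ⊤) (hy : y ≠ ⊤) (hz : z ≠ ⊤) :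
    (x + y + z).toReal = x.toReal + y.toReal + z.toReal := by
  rw [ENNReal.toReal_add (ENNReal.add_ne_top.mpr ⟨hx, hy⟩) hz, ENNReal.toReal_add hx hy]

lemma toReal_add5 {x1 x2 x3 x4 x5 : ℝ≥0∞} (h1 : x1 ≠ ⊤) (h2 : x2 ≠ ⊤) (h3 : x3 ≠ ⊤)
    (h4 : x4 ≠ ⊤) (h5 : x5 ≠ ⊤) :
    (x1 + x2 + x3 + x4 + x5).toReal
      = x1.toReal + x2.toReal + x3.toReal + x4.toReal + x5.toReal := by
  rw [ENNReal.toReal_add (ENNReal.add_ne_top.mpr ⟨ENNReal.add_ne_top.mpr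
    ⟨ENNReal.add_ne_top.mpr ⟨h1, h2⟩, h3⟩, h4⟩) h5,
    ENNReal.toReal_add (ENNReal.add_ne_top.mpr ⟨ENNReal.add_ne_top.mpr ⟨h1, h2⟩, h3⟩) h4,
    toReal_add3 h1 h2 h3]

lemma toReal_add7 {x1 x2 x3 x4 x5 x6 x7 : ℝ≥0∞} (h1 : x1 ≠ ⊤) (h2 : x2 ≠ ⊤) (h3 : x3 ≠ ⊤)
    (h4 : x4 ≠ ⊤) (h5 : x5 ≠ ⊤) (h6 : x6 ≠ ⊤) (h7 : x7 ≠ ⊤) :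
    (x1 + x2 + x3 + x4 + x5 + x6 + x7).toReal
      = x1.toReal + x2.toReal + x3.toReal + x4.toReal + x5.toReal + x6.toReal + x7.toReal := by
  rw [ENNReal.toReal_add (ENNReal.add_ne_top.mpr ⟨ENNReal.add_ne_top.mpr
    ⟨ENNReal.add_ne_top.mpr ⟨ENNReal.add_ne_top.mpr ⟨ENNReal.add_ne_top.mpr ⟨h1, h2⟩, h3⟩,
      h4⟩, h5⟩, h6⟩) h7,
    ENNReal.toReal_add (ENNReal.add_ne_top.mpr ⟨ENNReal.add_ne_top.mpr
      ⟨ENNReal.add_ne_top.mpr ⟨ENNReal.add_ne_top.mpr ⟨h1, h2⟩, h3⟩, h4⟩, h5⟩) h6,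
    toReal_add5 h1 h2 h3 h4 h5]

lemma R1 {a b : ℕ} (ha : 2 ≤ a) (hb : 2 ≤ b) :
    p1 a * p1 b = p2 a b + p2 b a + p1 (a + b) := by
  rw [p1, p1, p1, p2, p2, ← ENNReal.toReal_mul, S1 a b,
    toReal_add3 (Z2_ne_top ha hb) (Z2_ne_top hb ha) (Z1_ne_top (by omega))]

lemma R2 {a b c : ℕ} (ha : 2 ≤ a) (hb : 2 ≤ b) (hc : 2 ≤ c) :
    p2 a b * p1 c = p3 a b c + p3 a c b + p3 c a b + p2 (a + c) b + p2 a (b + c) := by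
  rw [p2, p1, p3, p3, p3, p2, p2, ← ENNReal.toReal_mul, S2 a b c,
    toReal_add5 (Z3_ne_top ha hb hc) (Z3_ne_top ha hc hb) (Z3_ne_top hc ha hb)
      (Z2_ne_top (by omega) hb) (Z2_ne_top ha (by omega))]

lemma R3 {a b c d : ℕ} (ha : 2 ≤ a) (hb : 2 ≤ b) (hc : 2 ≤ c) (hd : 2 ≤ d) :
    p3 a b c * p1 d = p4 d a b c + p4 a d b c + p4 a b d c + p4 a b c d
      + p3 (a + d) b c + p3 a (b + d) c + p3 a b (c + d) := by
  rw [p3, p1, p4, p4, p4, p4, p3, p3, p3, ← ENNReal.toReal_mul, S3 a b c d,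
    toReal_add7 (Z4_ne_top hd ha hb hc) (Z4_ne_top ha hd hb hc) (Z4_ne_top ha hb hd hc)
      (Z4_ne_top ha hb hc hd) (Z3_ne_top (by omega) hb hc) (Z3_ne_top ha (by omega) hc)
      (Z3_ne_top ha hb (by omega))]

lemma H3 {x y z : ℕ} (hx : 2 ≤ x) (hy : 2 ≤ y) (hz : 2 ≤ z) :
    p3 x y z + p3 x z y + p3 y x z + p3 y z x + p3 z x y + p3 z y x =
      p1 x * p1 y * p1 z
      - (p1 (x + y) * p1 z + p1 (x + z) * p1 y + p1 (y + z) * p1 x)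
      + 2 * p1 (x + y + z) := by
  have A := R2 hx hy hz
  have B := R2 hy hx hz
  have C := R1 hx hy
  have D := R1 (show 2 ≤ x + z by omega) hy
  have E := R1 hx (show 2 ≤ y + z by omega)
  rw [show x + z + y = x + y + z from by omega] at D
  rw [show x + (y + z) = x + y + z from by omega] at E
  linear_combination -A - B - p1 z * C + D + E

lemma strictAnti_fin1 (f : Fin 1 → ℕ) : StrictAnti f := by
  intro i j hij
  rw [Subsingleton.elim i j] at hij
  exact absurd hij (lt_irrefl _)

lemma cond2 (f : Fin 2 → ℕ) :
    (StrictAnti f ∧ ∀ i, 1 ≤ f i) ↔ (f 1 < f 0 ∧ 1 ≤ f 1) := by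
  constructor
  · rintro ⟨h, h'⟩
    exact ⟨h (by decide : (0 : Fin 2) < 1), h' 1⟩
  · rintro ⟨h1, h2⟩
    refine ⟨?_, ?_⟩
    · intro i j hij
      fin_cases i <;> fin_cases j <;>
        first
        | exact absurd hij (by decide)
        | exact h1
    · intro i
      fin_cases i
      · exact (by omega : 1 ≤ f 0)
      · exact (by omega : 1 ≤ f 1)

lemma cond3 (f : Fin 3 → ℕ) :
    (StrictAnti f ∧ ∀ i, 1 ≤ f i) ↔ (f 1 < f 0 ∧ f 2 < f 1 ∧ 1 ≤ f 2) := by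
  constructor
  · rintro ⟨h, h'⟩
    exact ⟨h (by decide : (0 : Fin 3) < 1), h (by decide : (1 : Fin 3) < 2), h' 2⟩
  · rintro ⟨h1, h2, h3⟩
    refine ⟨?_, ?_⟩
    · intro i j hij
      fin_cases i <;> fin_cases j <;>
        first
        | exact absurd hij (by decide)
        | exact h1
        | exact h2
        | exact h2.trans h1
    · intro i
      fin_cases i
      · exact (by omega : 1 ≤ f 0)
      · exact (by omega : 1 ≤ f 1)
      · exact (by omega : 1 ≤ f 2)

lemma cond4 (f : Fin 4 → ℕ) :
    (StrictAnti f ∧ ∀ i, 1 ≤ f i) ↔ (f 1 < f 0 ∧ f 2 < f 1 ∧ f 3 < f 2 ∧ 1 ≤ f 3) := by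
  constructor
  · rintro ⟨h, h'⟩
    exact ⟨h (by decide : (0 : Fin 4) < 1), h (by decide : (1 : Fin 4) < 2),
      h (by decide : (2 : Fin 4) < 3), h' 3⟩
  · rintro ⟨h1, h2, h3, h4⟩
    refine ⟨?_, ?_⟩
    · intro i j hij
      fin_cases i <;> fin_cases j <;>
        first
        | exact absurd hij (by decide)
        | exact h1
        | exact h2
        | exact h3
        | exact h2.trans h1
        | exact h3.trans h2
        | exact (h3.trans h2).trans h1
    · intro i
      fin_cases i
      · exact (by omega : 1 ≤ f 0)
      · exact (by omega : 1 ≤ f 1)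
      · exact (by omega : 1 ≤ f 2)
      · exact (by omega : 1 ≤ f 3)

lemma mzv_one (a : ℕ) : mzv ![a] = p1 a := by
  have hne : ∀ m : ℕ, (if 1 ≤ m then t a m else 0) ≠ ⊤ := fun m => by
    split_ifs with h
    · exact t_ne_top h
    · exact ENNReal.zero_ne_top
  rw [p1, Z1, ENNReal.tsum_toReal_eq hne]
  unfold mzv
  refine (Equiv.tsum_eq (⟨fun n : ℕ => fun _ : Fin 1 => n, fun f => f 0,
    fun n => rfl, fun f => funext fun i => by fin_cases i <;> rfl⟩ : ℕ ≃ (Fin 1 → ℕ))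
    _).symm.trans (tsum_congr fun n => ?_)
  simp only [Equiv.coe_fn_mk]
  by_cases hn : 1 ≤ n
  · rw [if_pos ⟨strictAnti_fin1 _, fun _ => hn⟩, if_pos hn, Fin.prod_univ_one, t_toReal]
    rfl
  · rw [if_neg (fun hh => hn (hh.2 0)), if_neg hn, ENNReal.toReal_zero]

lemma mzv_two (a b : ℕ) : mzv ![a, b] = p2 a b := by
  have hne : ∀ q : ℕ × ℕ, (if q.2 < q.1 ∧ 1 ≤ q.2 then t a q.1 * t b q.2 else 0) ≠ ⊤ :=
    fun q => by
      split_ifs with h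
      · exact ENNReal.mul_ne_top (t_ne_top (by omega)) (t_ne_top (by omega))
      · exact ENNReal.zero_ne_top
  rw [p2, Z2, ENNReal.tsum_toReal_eq hne]
  unfold mzv
  refine (Equiv.tsum_eq (⟨fun q : ℕ × ℕ => ![q.1, q.2], fun f => (f 0, f 1),
    fun q => rfl, fun f => funext fun i => by fin_cases i <;> rfl⟩ : ℕ × ℕ ≃ (Fin 2 → ℕ))
    _).symm.trans (tsum_congr fun q => ?_)
  change (if StrictAnti ![q.1, q.2] ∧ ∀ i, 1 ≤ ![q.1, q.2] i then ∏ i, (1 : ℝ) / ((![q.1, q.2] i : ℕ) : ℝ) ^ (![a, b] i) else 0) = _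
  by_cases hq : q.2 < q.1 ∧ 1 ≤ q.2
  · rw [if_pos ((cond2 ![q.1, q.2]).mpr hq), if_pos hq, Fin.prod_univ_two,
      ENNReal.toReal_mul, t_toReal, t_toReal]
    rfl
  · rw [if_neg (fun hh => hq ((cond2 ![q.1, q.2]).mp hh)), if_neg hq, ENNReal.toReal_zero]

lemma mzv_three (a b c : ℕ) : mzv ![a, b, c] = p3 a b c := by
  have hne : ∀ q : ℕ × ℕ × ℕ, (if q.2.1 < q.1 ∧ q.2.2 < q.2.1 ∧ 1 ≤ q.2.2 then
      t a q.1 * (t b q.2.1 * t c q.2.2) else 0) ≠ ⊤ := fun q => by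
    split_ifs with h
    · exact ENNReal.mul_ne_top (t_ne_top (by omega))
        (ENNReal.mul_ne_top (t_ne_top (by omega)) (t_ne_top (by omega)))
    · exact ENNReal.zero_ne_top
  rw [p3, Z3, ENNReal.tsum_toReal_eq hne]
  unfold mzv
  refine (Equiv.tsum_eq (⟨fun q : ℕ × ℕ × ℕ => ![q.1, q.2.1, q.2.2],
    fun f => (f 0, f 1, f 2),
    fun q => rfl, fun f => funext fun i => by fin_cases i <;> rfl⟩ :
      ℕ × ℕ × ℕ ≃ (Fin 3 → ℕ))
    _).symm.trans (tsum_congr fun q => ?_)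
  change (if StrictAnti ![q.1, q.2.1, q.2.2] ∧ ∀ i, 1 ≤ ![q.1, q.2.1, q.2.2] i then ∏ i, (1 : ℝ) / ((![q.1, q.2.1, q.2.2] i : ℕ) : ℝ) ^ (![a, b, c] i) else 0) = _
  by_cases hq : q.2.1 < q.1 ∧ q.2.2 < q.2.1 ∧ 1 ≤ q.2.2
  · rw [if_pos ((cond3 ![q.1, q.2.1, q.2.2]).mpr hq), if_pos hq, Fin.prod_univ_three,
      ENNReal.toReal_mul, ENNReal.toReal_mul, t_toReal, t_toReal, t_toReal]
    show 1 / (q.1 : ℝ) ^ a * (1 / (q.2.1 : ℝ) ^ b) * (1 / (q.2.2 : ℝ) ^ c) = _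
    ring
  · rw [if_neg (fun hh => hq ((cond3 ![q.1, q.2.1, q.2.2]).mp hh)), if_neg hq,
      ENNReal.toReal_zero]

lemma mzv_four (g : Fin 4 → ℕ) : mzv g = p4 (g 0) (g 1) (g 2) (g 3) := by
  have hne : ∀ q : ℕ × ℕ × ℕ × ℕ,
      (if q.2.1 < q.1 ∧ q.2.2.1 < q.2.1 ∧ q.2.2.2 < q.2.2.1 ∧ 1 ≤ q.2.2.2 then
        t (g 0) q.1 * (t (g 1) q.2.1 * (t (g 2) q.2.2.1 * t (g 3) q.2.2.2)) else 0) ≠ ⊤ :=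
    fun q => by
      split_ifs with h
      · exact ENNReal.mul_ne_top (t_ne_top (by omega)) (ENNReal.mul_ne_top
          (t_ne_top (by omega)) (ENNReal.mul_ne_top (t_ne_top (by omega))
            (t_ne_top (by omega))))
      · exact ENNReal.zero_ne_top
  rw [p4, Z4, ENNReal.tsum_toReal_eq hne]
  unfold mzv
  refine (Equiv.tsum_eq (⟨fun q : ℕ × ℕ × ℕ × ℕ => ![q.1, q.2.1, q.2.2.1, q.2.2.2],
    fun f => (f 0, f 1, f 2, f 3),
    fun q => rfl, fun f => funext fun i => by fin_cases i <;> rfl⟩ :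
      ℕ × ℕ × ℕ × ℕ ≃ (Fin 4 → ℕ))
    _).symm.trans (tsum_congr fun q => ?_)
  change (if StrictAnti ![q.1, q.2.1, q.2.2.1, q.2.2.2] ∧ ∀ i, 1 ≤ ![q.1, q.2.1, q.2.2.1, q.2.2.2] i then ∏ i, (1 : ℝ) / ((![q.1, q.2.1, q.2.2.1, q.2.2.2] i : ℕ) : ℝ) ^ (g i) else 0) = _
  by_cases hq : q.2.1 < q.1 ∧ q.2.2.1 < q.2.1 ∧ q.2.2.2 < q.2.2.1 ∧ 1 ≤ q.2.2.2
  · rw [if_pos ((cond4 ![q.1, q.2.1, q.2.2.1, q.2.2.2]).mpr hq), if_pos hq,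
      Fin.prod_univ_four, ENNReal.toReal_mul, ENNReal.toReal_mul, ENNReal.toReal_mul,
      t_toReal, t_toReal, t_toReal, t_toReal]
    show 1 / (q.1 : ℝ) ^ g 0 * (1 / (q.2.1 : ℝ) ^ g 1) * (1 / (q.2.2.1 : ℝ) ^ g 2)
      * (1 / (q.2.2.2 : ℝ) ^ g 3) = _
    ring
  · rw [if_neg (fun hh => hq ((cond4 ![q.1, q.2.1, q.2.2.1, q.2.2.2]).mp hh)), if_neg hq,
      ENNReal.toReal_zero]

lemma perm_sum_expand (G : Fin 4 → Fin 4 → Fin 4 → Fin 4 → ℝ) :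
    ∑ σ : Equiv.Perm (Fin 4), G (σ 0) (σ 1) (σ 2) (σ 3) =
      G 0 1 2 3 + G 0 1 3 2 + G 0 2 1 3 + G 0 2 3 1 + G 0 3 1 2 + G 0 3 2 1
      + G 1 0 2 3 + G 1 0 3 2 + G 1 2 0 3 + G 1 2 3 0 + G 1 3 0 2 + G 1 3 2 0
      + G 2 0 1 3 + G 2 0 3 1 + G 2 1 0 3 + G 2 1 3 0 + G 2 3 0 1 + G 2 3 1 0
      + G 3 0 1 2 + G 3 0 2 1 + G 3 1 0 2 + G 3 1 2 0 + G 3 2 0 1 + G 3 2 1 0 := by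
  have h : (Finset.univ.val.map (fun σ : Equiv.Perm (Fin 4) => (σ 0, σ 1, σ 2, σ 3))) =
      ({(0,1,2,3), (0,1,3,2), (0,2,1,3), (0,2,3,1), (0,3,1,2), (0,3,2,1),
        (1,0,2,3), (1,0,3,2), (1,2,0,3), (1,2,3,0), (1,3,0,2), (1,3,2,0),
        (2,0,1,3), (2,0,3,1), (2,1,0,3), (2,1,3,0), (2,3,0,1), (2,3,1,0),
        (3,0,1,2), (3,0,2,1), (3,1,0,2), (3,1,2,0), (3,2,0,1), (3,2,1,0)} :
        Multiset (Fin 4 × Fin 4 × Fin 4 × Fin 4)) := by decide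
  calc ∑ σ : Equiv.Perm (Fin 4), G (σ 0) (σ 1) (σ 2) (σ 3)
      = ((Finset.univ.val.map (fun σ : Equiv.Perm (Fin 4) => (σ 0, σ 1, σ 2, σ 3))).map
          (fun v => G v.1 v.2.1 v.2.2.1 v.2.2.2)).sum := by
        rw [Multiset.map_map]; rfl
    _ = _ := by
        rw [h]
        simp only [Multiset.insert_eq_cons, Multiset.map_cons, Multiset.sum_cons,
          Multiset.map_singleton, Multiset.sum_singleton]
        ring

end HoffmanAux

open HoffmanAux

theorem hoffman_symmetric_sum_depth_four (l1 l2 l3 l4 : ℕ)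
    (h1 : 2 ≤ l1) (h2 : 2 ≤ l2) (h3 : 2 ≤ l3) (h4 : 2 ≤ l4) :
    ∑ σ : Equiv.Perm (Fin 4), mzv (![l1, l2, l3, l4] ∘ σ) =
      mzv ![l1] * mzv ![l2] * mzv ![l3] * mzv ![l4]
        - (mzv ![l1 + l2] * mzv ![l3] * mzv ![l4]
            + mzv ![l1 + l3] * mzv ![l2] * mzv ![l4]
            + mzv ![l1 + l4] * mzv ![l2] * mzv ![l3]
            + mzv ![l2 + l3] * mzv ![l1] * mzv ![l4]
            + mzv ![l2 + l4] * mzv ![l1] * mzv ![l3]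
            + mzv ![l3 + l4] * mzv ![l1] * mzv ![l2])
        + (mzv ![l1 + l2] * mzv ![l3 + l4] + mzv ![l1 + l3] * mzv ![l2 + l4]
            + mzv ![l1 + l4] * mzv ![l2 + l3])
        + 2 * (mzv ![l1 + l2 + l3] * mzv ![l4] + mzv ![l1 + l2 + l4] * mzv ![l3]
            + mzv ![l1 + l3 + l4] * mzv ![l2] + mzv ![l2 + l3 + l4] * mzv ![l1])
        - 6 * mzv ![l1 + l2 + l3 + l4] := by
  have hL0 : (![l1, l2, l3, l4] : Fin 4 → ℕ) 0 = l1 := rfl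
  have hL1 : (![l1, l2, l3, l4] : Fin 4 → ℕ) 1 = l2 := rfl
  have hL2 : (![l1, l2, l3, l4] : Fin 4 → ℕ) 2 = l3 := rfl
  have hL3 : (![l1, l2, l3, l4] : Fin 4 → ℕ) 3 = l4 := rfl
  have hsum : ∑ σ : Equiv.Perm (Fin 4), mzv (![l1, l2, l3, l4] ∘ σ)
      = ∑ σ : Equiv.Perm (Fin 4),
          (fun i j k m => p4 (![l1, l2, l3, l4] i) (![l1, l2, l3, l4] j)
            (![l1, l2, l3, l4] k) (![l1, l2, l3, l4] m)) (σ 0) (σ 1) (σ 2) (σ 3) :=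
    Finset.sum_congr rfl (fun σ _ => mzv_four _)
  rw [hsum, perm_sum_expand (fun i j k m => p4 (![l1, l2, l3, l4] i) (![l1, l2, l3, l4] j)
    (![l1, l2, l3, l4] k) (![l1, l2, l3, l4] m))]
  simp only [hL0, hL1, hL2, hL3, mzv_one]
  have E1 := R3 h1 h2 h3 h4
  have E2 := R3 h1 h3 h2 h4
  have E3 := R3 h2 h1 h3 h4
  have E4 := R3 h2 h3 h1 h4
  have E5 := R3 h3 h1 h2 h4
  have E6 := R3 h3 h2 h1 h4
  have G0 := H3 h1 h2 h3
  have G1 := H3 (show 2 ≤ l1 + l4 by omega) h2 h3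
  have G2 := H3 h1 (show 2 ≤ l2 + l4 by omega) h3
  have G3 := H3 h1 h2 (show 2 ≤ l3 + l4 by omega)
  rw [show l1 + l4 + l2 = l1 + l2 + l4 from by omega,
    show l1 + l4 + l3 = l1 + l3 + l4 from by omega,
    show l1 + l2 + l4 + l3 = l1 + l2 + l3 + l4 from by omega] at G1
  rw [show l1 + (l2 + l4) = l1 + l2 + l4 from by omega,
    show l2 + l4 + l3 = l2 + l3 + l4 from by omega,
    show l1 + l2 + l4 + l3 = l1 + l2 + l3 + l4 from by omega] at G2
  rw [show l1 + (l3 + l4) = l1 + l3 + l4 from by omega,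
    show l2 + (l3 + l4) = l2 + l3 + l4 from by omega,
    show l1 + l2 + (l3 + l4) = l1 + l2 + l3 + l4 from by omega] at G3
  linear_combination (-(E1 + E2 + E3 + E4 + E5 + E6) + p1 l4 * G0 - G1 - G2 - G3)
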